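/- For a strictly positive density q, the fiber Legendre transform of the cumulant Lagrangian L_q(w) = K_q(w) = log E_q[e^w] on q-centered random variables is H_q(η) = E_q[(1+η)log(1+η)] for η > -1 with E_q[η]=0; that is, with η = e^{w - K_q(w)} - 1 it holds E_q[ηw] - K_q(w) = E_q[(1+η)log(1+η)]. -/

import Mathlib

open Real Finset

noncomputable def Ex {Ω : Type*} [Fintype Ω] (p f : Ω → ℝ) : ℝ :=
  (∑ x, f x * p x) / (Fintype.card Ω : ℝ)

noncomputable def Kp {Ω : Type*} [Fintype Ω] (p : Ω → ℝ) (u : Ω → ℝ) : ℝ :=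
  Real.log (Ex p (fun x => Real.exp (u x)))

theorem stmt16 {Ω : Type*} [Fintype Ω] [Nonempty Ω]
    (q : Ω → ℝ) (hq : ∀ x, 0 < q x) (hqd : Ex q (fun _ => 1) = 1)
    (w : Ω → ℝ) (hw : Ex q w = 0)
    (η : Ω → ℝ) (hη : ∀ x, η x = Real.exp (w x - Kp q w) - 1) :
    (∀ x, -1 < η x) ∧ Ex q η = 0 ∧
      Ex q (fun x => η x * w x) - Kp q w =
        Ex q (fun x => (1 + η x) * Real.log (1 + η x)) := by
  have hc : (0:ℝ) < (Fintype.card Ω : ℝ) := by exact_mod_cast Fintype.card_pos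
  have hc' : (Fintype.card Ω : ℝ) ≠ 0 := ne_of_gt hc
  have hqs : ∑ x, q x = (Fintype.card Ω : ℝ) := by
    have h := hqd
    simp only [Ex, one_mul] at h
    rw [div_eq_one_iff_eq hc'] at h
    exact h
  have hws : ∑ x, w x * q x = 0 := by
    have h := hw
    simp only [Ex] at h
    rw [div_eq_zero_iff] at h
    rcases h with h | h
    · exact h
    · exact absurd h hc'
  have hpos : 0 < Ex q (fun x => Real.exp (w x)) := by
    apply div_pos _ hc
    exact Finset.sum_pos (fun x _ => mul_pos (Real.exp_pos _) (hq x)) Finset.univ_nonempty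
  set K := Kp q w with hKdef
  have hK : Real.exp K = Ex q (fun x => Real.exp (w x)) := Real.exp_log hpos
  have hEs : ∑ x, Real.exp (w x) * q x = Real.exp K * (Fintype.card Ω : ℝ) := by
    rw [hK]
    simp only [Ex]
    field_simp
  have hηs : ∑ x, η x * q x = 0 := by
    have h1 : ∀ x ∈ Finset.univ, η x * q x
        = Real.exp (-K) * (Real.exp (w x) * q x) - q x := by
      intro x _
      rw [hη x, Real.exp_sub, Real.exp_neg]
      field_simp
    rw [Finset.sum_congr rfl h1, Finset.sum_sub_distrib, ← Finset.mul_sum, hEs, hqs,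
      Real.exp_neg]
    field_simp
    ring
  refine ⟨fun x => ?_, ?_, ?_⟩
  · have := Real.exp_pos (w x - K); rw [hη x]; linarith
  · simp only [Ex]; rw [hηs]; simp
  · have key : ∑ x, (1 + η x) * Real.log (1 + η x) * q x
        = (∑ x, η x * w x * q x) - K * (Fintype.card Ω : ℝ) := by
      have h1 : ∀ x ∈ Finset.univ, (1 + η x) * Real.log (1 + η x) * q x
          = η x * w x * q x + w x * q x - K * (η x * q x) - K * q x := by
        intro x _
        have e1 : 1 + η x = Real.exp (w x - K) := by rw [hη x]; ring
        rw [e1, Real.log_exp, e1.symm]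
        ring
      rw [Finset.sum_congr rfl h1]
      simp only [Finset.sum_sub_distrib, Finset.sum_add_distrib, ← Finset.mul_sum,
        hws, hηs, hqs]
      ring
    simp only [Ex]
    rw [key]
    field_simp
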